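/- Let A = (Q, Σ, Δ, q0, F) be a complete NFA with finite state set Q. Suppose there exist states q, q' ∈ Q and strings s0, s, s1 ∈ Σ* such that: (i) there is a run of A from q0 to q labeled by s0, (ii) there exist a run π1 from q to q labeled by s, a run π2 from q to q' labeled by s with π1 ≠ π2, and a run π3 from q' to q' labeled by s, and (iii) no run of A from q' labeled by s1 ends in an accepting state. Then for every natural number k ≥ 1 there exists a non-accepting state q_r ∈ Q \ F such that the number of distinct runs of A from q0 to q_r labeled by s0·s^k·s1 is at least k / |Q|. -/
import Mathlib


/-- A nondeterministic finite automaton `A = (Q, Σ, Δ, q0, F)` with state type `Q`,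
alphabet `A`, transition function `δ`, initial state `q0` and accepting states `F`. -/
structure NFA' (Q A : Type*) where
  δ : Q → A → Set Q
  q0 : Q
  F : Set Q

namespace NFA'

variable {Q A : Type*}

/-- `ρ` is a run of the automaton labeled by the word `w`: the state sequence
`ρ 0, ρ 1, …, ρ |w|` follows transitions of `M` along the letters of `w`. -/
def IsRunOn (M : NFA' Q A) (w : List A) (ρ : Fin (w.length + 1) → Q) : Prop :=
  ∀ i : Fin w.length, ρ i.succ ∈ M.δ (ρ i.castSucc) (w.get i)

/-- The set of runs of `M` from `p` to `r` labeled by the word `w`,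
represented by their state sequences. -/
def Runs (M : NFA' Q A) (p r : Q) (w : List A) : Set (Fin (w.length + 1) → Q) :=
  {ρ | ρ 0 = p ∧ ρ (Fin.last w.length) = r ∧ M.IsRunOn w ρ}

end NFA'

/-- `wordPow s k` is the `k`-fold concatenation `s^k` of the word `s`. -/
def wordPow {A : Type*} (s : List A) : ℕ → List A
  | 0 => []
  | k + 1 => s ++ wordPow s k

namespace VulnAux

variable {Q A : Type*}

lemma wordPow_length (s : List A) (k : ℕ) : (wordPow s k).length = k * s.length := by
  induction k with
  | zero => simp [wordPow]
  | succ k ih => simp [wordPow, ih]; ring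

lemma wordPow_getElem? (s : List A) (hL : 0 < s.length) (k m : ℕ) (hm : m < k * s.length) :
    (wordPow s k)[m]? = s[m % s.length]? := by
  induction k generalizing m with
  | zero => omega
  | succ k ih =>
    show (s ++ wordPow s k)[m]? = _
    rcases lt_or_ge m s.length with h | h
    · rw [List.getElem?_append_left h, Nat.mod_eq_of_lt h]
    · rw [List.getElem?_append_right h]
      have h2 : m - s.length < k * s.length := by
        have h3 : (k + 1) * s.length = k * s.length + s.length := by ring
        omega
      rw [ih (m - s.length) h2]
      congr 1
      conv_rhs => rw [show m = (m - s.length) + s.length by omega]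
      rw [Nat.add_mod_right]

/-- extension of a run to all of ℕ by clamping -/
def ext {m : ℕ} (ρ : Fin (m + 1) → Q) : ℕ → Q := fun n => ρ ⟨min n m, by omega⟩

lemma ext_eq {m : ℕ} (ρ : Fin (m + 1) → Q) {n : ℕ} (h : n ≤ m) :
    ext ρ n = ρ ⟨n, by omega⟩ := by simp [ext, min_eq_left h]

/-- given a word `w` and any start state, a complete NFA has a run on `w`. -/
lemma exists_run (M : NFA' Q A) (hcomplete : ∀ (p : Q) (a : A), (M.δ p a).Nonempty) :
    ∀ (w : List A) (p : Q), ∃ r ρ, ρ ∈ M.Runs p r w := by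
  intro w
  induction w with
  | nil =>
    intro p
    exact ⟨p, fun _ => p, rfl, rfl, fun i => i.elim0⟩
  | cons a t ih =>
    intro p
    obtain ⟨q1, hq1⟩ := hcomplete p a
    obtain ⟨r, ρ', h0, hlast, hrun⟩ := ih q1
    refine ⟨r, Fin.cons p ρ', ?_, ?_, ?_⟩
    · simp [Fin.cons_zero]
    · have : Fin.last ((a :: t).length) = Fin.succ (Fin.last t.length) := by
        ext; simp
      rw [this, Fin.cons_succ]; exact hlast
    · intro i
      refine Fin.cases ?_ ?_ i
      · simpa [Fin.cons_succ, Fin.cons_zero, h0] using hq1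
      · intro j
        have h1 : (Fin.succ j).succ = Fin.succ (Fin.succ j) := rfl
        have h2 : Fin.castSucc (Fin.succ j) = Fin.succ (Fin.castSucc j) := rfl
        rw [h1, h2, Fin.cons_succ, Fin.cons_succ]
        exact hrun j

/-- the `j`-th big run: prefix `ρ₀` of length `P`, then `k` blocks of length `L`
(π₁ before block `j`, π₂ at block `j`, π₃ after), then suffix `σr`. -/
def bigRun (ρ₀ π₁ π₂ π₃ σr : ℕ → Q) (P L k j : ℕ) : ℕ → Q := fun n =>
  if n < P then ρ₀ n
  else if n < P + k * L then
    (if (n - P) / L < j then π₁ else if (n - P) / L = j then π₂ else π₃) ((n - P) % L)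
  else σr (n - (P + k * L))

variable {ρ₀ π₁ π₂ π₃ σr : ℕ → Q} {P L k j : ℕ} {qv q'v : Q}
variable (hL : 0 < L) (hk : 0 < k) (hj : j < k)
variable (hρP : ρ₀ P = qv) (h10 : π₁ 0 = qv) (h1L : π₁ L = qv)
variable (h20 : π₂ 0 = qv) (h2L : π₂ L = q'v)
variable (h30 : π₃ 0 = q'v) (h3L : π₃ L = q'v) (hσ0 : σr 0 = q'v)

include hL hk hρP h10 h20 in
lemma bigRun_prefix {n : ℕ} (hn : n ≤ P) :
    bigRun ρ₀ π₁ π₂ π₃ σr P L k j n = ρ₀ n := by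
  unfold bigRun
  rcases lt_or_eq_of_le hn with h | h
  · rw [if_pos h]
  · subst h
    rw [if_neg (lt_irrefl _)]
    have : 0 < k * L := by positivity
    rw [if_pos (by omega)]
    simp only [Nat.sub_self, Nat.zero_div, Nat.zero_mod]
    rcases Nat.lt_or_ge 0 j with h | h
    · rw [if_pos h, h10, hρP]
    · interval_cases j
      simp [h20, hρP]

include hL hj h10 h1L h20 h2L h30 h3L hσ0 in
lemma bigRun_block {b i : ℕ} (hb : b < k) (hi : i ≤ L) :
    bigRun ρ₀ π₁ π₂ π₃ σr P L k j (P + b * L + i) =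
      (if b < j then π₁ else if b = j then π₂ else π₃) i := by
  unfold bigRun
  rw [if_neg (by omega)]
  rcases lt_or_eq_of_le hi with h | h
  · have hbL : b * L + L ≤ k * L := by
      have := Nat.mul_le_mul_right L (show b + 1 ≤ k by omega)
      calc b * L + L = (b + 1) * L := by ring
      _ ≤ k * L := this
    rw [if_pos (by omega)]
    have hm : P + b * L + i - P = b * L + i := by omega
    rw [hm, show b * L + i = i + L * b by ring, Nat.add_mul_div_left _ _ hL,
      Nat.div_eq_of_lt h, Nat.add_mul_mod_self_left, Nat.mod_eq_of_lt h]
    simp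
  · rw [h]; clear hi h
    rcases Nat.lt_or_ge (b + 1) k with hbk | hbk
    · have hbL : (b + 1) * L + L ≤ k * L := by
        have := Nat.mul_le_mul_right L (show b + 2 ≤ k by omega)
        calc (b + 1) * L + L = (b + 2) * L := by ring
        _ ≤ k * L := this
      have hm : P + b * L + L - P = L * (b + 1) := by ring_nf; omega
      have hbL2 : (b + 1) * L = L * (b + 1) := by ring
      rw [if_pos (by omega), hm, Nat.mul_div_cancel_left _ hL, Nat.mul_mod_right]
      rcases Nat.lt_trichotomy (b + 1) j with h | h | h
      · rw [if_pos h, if_pos (by omega), h10, h1L]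
      · rw [if_neg (by omega), if_pos h, if_pos (by omega), h20, h1L]
      · rcases Nat.lt_or_ge b j with hb' | hb'
        · omega
        · rw [if_neg (by omega), if_neg (by omega), if_neg (by omega)]
          rcases Nat.eq_or_lt_of_le hb' with hbj | hbj
          · rw [if_pos hbj.symm, h2L, h30]
          · rw [if_neg (by omega), h3L, h30]
    · have hbk' : b + 1 = k := by omega
      have hn : P + b * L + L = P + k * L := by
        have : k * L = (b + 1) * L := by rw [hbk']
        rw [this]; ring
      rw [if_neg (by omega), hn, Nat.sub_self, hσ0, if_neg (by omega)]
      rcases Nat.eq_or_lt_of_le (show j ≤ b by omega) with h | h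
      · rw [if_pos h.symm, h2L]
      · rw [if_neg (by omega), h3L]

lemma bigRun_suffix (i : ℕ) :
    bigRun ρ₀ π₁ π₂ π₃ σr P L k j (P + k * L + i) = σr i := by
  unfold bigRun
  rw [if_neg (by omega), if_neg (by omega)]
  congr 1
  omega

end VulnAux

open VulnAux

/-- For a complete NFA with finitely many states: if `q` is reachable from `q0` via `s0`,
there are a loop `π₁` at `q`, a run `π₂` from `q` to `q'` with `π₁ ≠ π₂`, and a loop `π₃`
at `q'`, all labeled by `s`, and no run from `q'` labeled `s1` ends in an accepting state,
then for every `k ≥ 1` some non-accepting state `q_r` admits at least `k / |Q|` distinct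
runs from `q0` labeled `s0 · s^k · s1`. -/
theorem vulnerable_superlinear_runs_of_complete {Q A : Type*} [Fintype Q]
    (M : NFA' Q A) (hcomplete : ∀ (p : Q) (a : A), (M.δ p a).Nonempty)
    (q q' : Q) (s₀ s s₁ : List A)
    (hpre : (M.Runs M.q0 q s₀).Nonempty)
    (hcore : ∃ π₁ π₂ π₃, π₁ ∈ M.Runs q q s ∧ π₂ ∈ M.Runs q q' s ∧ π₁ ≠ π₂ ∧
      π₃ ∈ M.Runs q' q' s)
    (hsuf : ∀ r : Q, r ∈ M.F → M.Runs q' r s₁ = ∅) :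
    ∀ k : ℕ, 1 ≤ k → ∃ qr : Q, qr ∉ M.F ∧
      ((k / Fintype.card Q : ℕ) : ℕ∞) ≤
        (M.Runs M.q0 qr (s₀ ++ wordPow s k ++ s₁)).encard := by
  intro k hk1
  classical
  obtain ⟨π₁, π₂, π₃, hπ₁, hπ₂, hne, hπ₃⟩ := hcore
  rcases Nat.eq_zero_or_pos s.length with hL0 | hL
  · exfalso
    apply hne
    funext t
    have h1 : t = 0 := by
      apply Fin.ext
      simp only [Fin.val_zero]
      have := t.isLt
      omega
    rw [h1, hπ₁.1, ← hπ₂.1]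
  obtain ⟨ρ₀, hρ₀⟩ := hpre
  obtain ⟨r, σr, hσ⟩ := exists_run M hcomplete s₁ q'
  have hrF : r ∉ M.F := by
    intro hr
    rw [hsuf r hr] at hσ
    exact hσ
  refine ⟨r, hrF, ?_⟩
  have hk0 : 0 < k := hk1
  have hNw : (s₀ ++ wordPow s k ++ s₁).length = s₀.length + k * s.length + s₁.length := by
    have h := wordPow_length s k
    simp only [List.length_append]
    omega
  -- endpoint facts
  have ezero : ∀ {m : ℕ} (ρ : Fin (m + 1) → Q), ext ρ 0 = ρ 0 := by
    intro m ρ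
    rw [ext_eq ρ (Nat.zero_le _)]
    congr 1
  have elast : ∀ {m : ℕ} (ρ : Fin (m + 1) → Q), ext ρ m = ρ (Fin.last m) := by
    intro m ρ
    rw [ext_eq ρ le_rfl]
    rfl
  have eρP : ext ρ₀ s₀.length = q := by rw [elast]; exact hρ₀.2.1
  have e10 : ext π₁ 0 = q := by rw [ezero]; exact hπ₁.1
  have e1L : ext π₁ s.length = q := by rw [elast]; exact hπ₁.2.1
  have e20 : ext π₂ 0 = q := by rw [ezero]; exact hπ₂.1
  have e2L : ext π₂ s.length = q' := by rw [elast]; exact hπ₂.2.1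
  have e30 : ext π₃ 0 = q' := by rw [ezero]; exact hπ₃.1
  have e3L : ext π₃ s.length = q' := by rw [elast]; exact hπ₃.2.1
  have eσ0 : ext σr 0 = q' := by rw [ezero]; exact hσ.1
  set f : Fin k → (Fin ((s₀ ++ wordPow s k ++ s₁).length + 1) → Q) :=
    fun j t => bigRun (ext ρ₀) (ext π₁) (ext π₂) (ext π₃) (ext σr)
      s₀.length s.length k j.val t.val with hf
  -- each f j is a run
  have hmem : ∀ j : Fin k, f j ∈ M.Runs M.q0 r (s₀ ++ wordPow s k ++ s₁) := by
    intro j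
    refine ⟨?_, ?_, ?_⟩
    · show bigRun (ext ρ₀) (ext π₁) (ext π₂) (ext π₃) (ext σr)
        s₀.length s.length k j.val ((0 : Fin _).val) = M.q0
      rw [Fin.val_zero, bigRun_prefix hL hk0 eρP e10 e20 (Nat.zero_le _), ezero]
      exact hρ₀.1
    · show bigRun (ext ρ₀) (ext π₁) (ext π₂) (ext π₃) (ext σr)
        s₀.length s.length k j.val ((Fin.last _).val) = r
      rw [Fin.val_last, hNw, bigRun_suffix, elast]
      exact hσ.2.1
    · intro i
      have hn : i.val < s₀.length + k * s.length + s₁.length := by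
        rw [← hNw]; exact i.isLt
      show bigRun (ext ρ₀) (ext π₁) (ext π₂) (ext π₃) (ext σr)
          s₀.length s.length k j.val (i.val + 1) ∈
        M.δ (bigRun (ext ρ₀) (ext π₁) (ext π₂) (ext π₃) (ext σr)
          s₀.length s.length k j.val i.val) ((s₀ ++ wordPow s k ++ s₁).get i)
      have hwlen : (s₀ ++ wordPow s k).length = s₀.length + k * s.length := by
        simp [wordPow_length]
      rcases Nat.lt_or_ge i.val s₀.length with hc | hc
      · -- prefix part
        have e1 : bigRun (ext ρ₀) (ext π₁) (ext π₂) (ext π₃) (ext σr)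
            s₀.length s.length k j.val i.val = ρ₀ ⟨i.val, by omega⟩ := by
          rw [bigRun_prefix hL hk0 eρP e10 e20 (le_of_lt hc), ext_eq _ (le_of_lt hc)]
        have e2 : bigRun (ext ρ₀) (ext π₁) (ext π₂) (ext π₃) (ext σr)
            s₀.length s.length k j.val (i.val + 1) = ρ₀ ⟨i.val + 1, by omega⟩ := by
          rw [bigRun_prefix hL hk0 eρP e10 e20 hc, ext_eq _ hc]
        have hlet : (s₀ ++ wordPow s k ++ s₁).get i = s₀.get ⟨i.val, hc⟩ := by
          have h1 : (s₀ ++ wordPow s k ++ s₁)[i.val]? = s₀[i.val]? := by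
            rw [List.getElem?_append_left (by omega), List.getElem?_append_left hc]
          rw [List.getElem?_eq_getElem (by omega), List.getElem?_eq_getElem hc] at h1
          simp only [Option.some.injEq] at h1
          rw [List.get_eq_getElem, List.get_eq_getElem]
          exact h1
        rw [e1, e2, hlet]
        exact hρ₀.2.2 ⟨i.val, hc⟩
      rcases Nat.lt_or_ge i.val (s₀.length + k * s.length) with hc2 | hc2
      · -- middle part
        have hmdef := Nat.div_add_mod (i.val - s₀.length) s.length
        set b := (i.val - s₀.length) / s.length with hbdef
        set i0 := (i.val - s₀.length) % s.length with hi0def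
        have hi0L : i0 < s.length := Nat.mod_lt _ hL
        have hbk : b < k := (Nat.div_lt_iff_lt_mul hL).mpr (by omega)
        have hcomm : b * s.length = s.length * b := Nat.mul_comm _ _
        have hival : i.val = s₀.length + b * s.length + i0 := by omega
        have e1 : bigRun (ext ρ₀) (ext π₁) (ext π₂) (ext π₃) (ext σr)
            s₀.length s.length k j.val i.val =
            (if b < j.val then ext π₁ else if b = j.val then ext π₂ else ext π₃) i0 := by
          rw [hival]
          exact bigRun_block hL j.isLt e10 e1L e20 e2L e30 e3L eσ0 hbk (le_of_lt hi0L)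
        have e2 : bigRun (ext ρ₀) (ext π₁) (ext π₂) (ext π₃) (ext σr)
            s₀.length s.length k j.val (i.val + 1) =
            (if b < j.val then ext π₁ else if b = j.val then ext π₂ else ext π₃) (i0 + 1) := by
          rw [show i.val + 1 = s₀.length + b * s.length + (i0 + 1) by omega]
          exact bigRun_block hL j.isLt e10 e1L e20 e2L e30 e3L eσ0 hbk hi0L
        obtain ⟨π, hπrun, hπeq⟩ :
            ∃ π, M.IsRunOn s π ∧
              (if b < j.val then ext π₁ else if b = j.val then ext π₂ else ext π₃) = ext π := by
          split_ifs
          exacts [⟨π₁, hπ₁.2.2, rfl⟩, ⟨π₂, hπ₂.2.2, rfl⟩, ⟨π₃, hπ₃.2.2, rfl⟩]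
        have hlet : (s₀ ++ wordPow s k ++ s₁).get i = s.get ⟨i0, hi0L⟩ := by
          have h1 : (s₀ ++ wordPow s k ++ s₁)[i.val]? = s[i0]? := by
            rw [List.getElem?_append_left (by omega),
              List.getElem?_append_right (by omega),
              wordPow_getElem? s hL k (i.val - s₀.length) (by omega)]
          rw [List.getElem?_eq_getElem (by omega), List.getElem?_eq_getElem hi0L] at h1
          simp only [Option.some.injEq] at h1
          rw [List.get_eq_getElem, List.get_eq_getElem]
          exact h1
        rw [e1, e2, hπeq, ext_eq _ hi0L, ext_eq _ (le_of_lt hi0L), hlet]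
        exact hπrun ⟨i0, hi0L⟩
      · -- suffix part
        set i0 := i.val - (s₀.length + k * s.length) with hi0def
        have hi0lt : i0 < s₁.length := by omega
        have e1 : bigRun (ext ρ₀) (ext π₁) (ext π₂) (ext π₃) (ext σr)
            s₀.length s.length k j.val i.val = σr ⟨i0, by omega⟩ := by
          conv_lhs => rw [show (i.val : ℕ) = s₀.length + k * s.length + i0 from by omega]
          rw [bigRun_suffix, ext_eq _ (le_of_lt hi0lt)]
        have e2 : bigRun (ext ρ₀) (ext π₁) (ext π₂) (ext π₃) (ext σr)
            s₀.length s.length k j.val (i.val + 1) = σr ⟨i0 + 1, by omega⟩ := by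
          conv_lhs => rw [show (i.val + 1 : ℕ) = s₀.length + k * s.length + (i0 + 1) from by omega]
          rw [bigRun_suffix, ext_eq _ hi0lt]
        have hlet : (s₀ ++ wordPow s k ++ s₁).get i = s₁.get ⟨i0, hi0lt⟩ := by
          have h1 : (s₀ ++ wordPow s k ++ s₁)[i.val]? = s₁[i0]? := by
            rw [List.getElem?_append_right (by omega)]
            congr 1
            omega
          rw [List.getElem?_eq_getElem (by omega), List.getElem?_eq_getElem hi0lt] at h1
          simp only [Option.some.injEq] at h1
          rw [List.get_eq_getElem, List.get_eq_getElem]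
          exact h1
        rw [e1, e2, hlet]
        exact hσ.2.2 ⟨i0, hi0lt⟩
  -- injectivity
  obtain ⟨t, ht⟩ := Function.ne_iff.mp hne
  have key : ∀ j j' : Fin k, j.val < j'.val → f j ≠ f j' := by
    intro j j' hlt hjj
    have hjL : j.val * s.length + s.length ≤ k * s.length := by
      have := Nat.mul_le_mul_right s.length (show j.val + 1 ≤ k from j.isLt)
      calc j.val * s.length + s.length = (j.val + 1) * s.length := by ring
      _ ≤ k * s.length := this
    have hnlt : s₀.length + j.val * s.length + t.val < (s₀ ++ wordPow s k ++ s₁).length + 1 := by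
      have := t.isLt
      omega
    have h1 : f j ⟨_, hnlt⟩ = π₂ t := by
      show bigRun (ext ρ₀) (ext π₁) (ext π₂) (ext π₃) (ext σr)
        s₀.length s.length k j.val (s₀.length + j.val * s.length + t.val) = π₂ t
      rw [bigRun_block hL j.isLt e10 e1L e20 e2L e30 e3L eσ0 j.isLt
        (Nat.le_of_lt_succ t.isLt), if_neg (lt_irrefl _), if_pos rfl,
        ext_eq _ (Nat.le_of_lt_succ t.isLt)]
    have h2 : f j' ⟨_, hnlt⟩ = π₁ t := by
      show bigRun (ext ρ₀) (ext π₁) (ext π₂) (ext π₃) (ext σr)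
        s₀.length s.length k j'.val (s₀.length + j.val * s.length + t.val) = π₁ t
      rw [bigRun_block hL j'.isLt e10 e1L e20 e2L e30 e3L eσ0 (lt_trans hlt j'.isLt)
        (Nat.le_of_lt_succ t.isLt), if_pos hlt,
        ext_eq _ (Nat.le_of_lt_succ t.isLt)]
    apply ht
    rw [← h1, ← h2, hjj]
  have hinj : Function.Injective f := by
    intro j j' hjj
    by_contra hne'
    rcases Nat.lt_trichotomy j.val j'.val with h | h | h
    · exact key j j' h hjj
    · exact hne' (Fin.ext h)
    · exact key j' j h hjj.symm
  -- conclude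
  have hsub : Set.range f ⊆ M.Runs M.q0 r (s₀ ++ wordPow s k ++ s₁) := by
    rintro _ ⟨j, rfl⟩
    exact hmem j
  have hcard : (Set.range f).encard = k := by
    rw [← Set.image_univ, Set.InjOn.encard_image (hinj.injOn), Set.encard_univ]
    simp [ENat.card_eq_coe_fintype_card]
  calc ((k / Fintype.card Q : ℕ) : ℕ∞) ≤ (k : ℕ∞) := Nat.cast_le.mpr (Nat.div_le_self _ _)
    _ = (Set.range f).encard := hcard.symm
    _ ≤ _ := Set.encard_le_encard hsub
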